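/- arXiv:2212.13507 — 2 statements merged into one kernel-verified Lean document; each statement's English description precedes it below -/
import Mathlib

section
/- Let δ ∈ (0, 1/2] and G_δ(s) = s/δ + ln δ - 1 for s < δ, G_δ(s) = ln s for s ≥ δ. Then for every real s, s - G_δ(s) ≥ |s|/2. -/
/-- For `δ ∈ (0, 1/2]` and the regularized logarithm
`G_δ(s) = s/δ + log δ - 1` for `s < δ`, `G_δ(s) = log s` for `s ≥ δ`,
one has `s - G_δ(s) ≥ |s|/2` for every real `s`. -/
theorem sub_Gdelta_ge_half_abs (δ : ℝ) (hδ0 : 0 < δ) (hδ1 : δ ≤ 1 / 2) (s : ℝ) :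
    |s| / 2 ≤ s - (if s < δ then s / δ + Real.log δ - 1 else Real.log s) := by
  rcases lt_or_ge s δ with hs | hs
  · rw [if_pos hs]
    have hlogδ : Real.log δ ≤ 0 := Real.log_nonpos hδ0.le (by linarith)
    have hinv : 2 ≤ 1 / δ := by rw [le_div_iff₀ hδ0]; linarith
    have hdiv : s / δ = s * (1 / δ) := by ring
    rcases abs_cases s with ⟨h1, h2⟩ | ⟨h1, h2⟩ <;> rw [h1]
    · have : s / δ < 1 := (div_lt_one hδ0).mpr hs
      nlinarith
    · rw [hdiv]
      nlinarith [mul_le_mul_of_nonpos_left hinv (le_of_lt h2)]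
  · rw [if_neg (not_lt.mpr hs)]
    have hs0 : 0 < s := lt_of_lt_of_le hδ0 hs
    rw [abs_of_pos hs0]
    have h1 : Real.log (Real.sqrt s) ≤ Real.sqrt s - 1 :=
      Real.log_le_sub_one_of_pos (Real.sqrt_pos.mpr hs0)
    rw [Real.log_sqrt hs0.le] at h1
    nlinarith [sq_nonneg (Real.sqrt s - 2), Real.sq_sqrt hs0.le]
end

section
/- Let δ ∈ (0, 1/2] and G_δ as above, with G_δ'(s) = 1/δ for s < δ and 1/s for s ≥ δ. Then for every real s, s·(1 - G_δ'(s)) ≥ |s|/2 - 1. -/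
/-- For `δ ∈ (0, 1/2]` and the derivative `G_δ'(s) = 1/δ` for `s < δ`, `G_δ'(s) = 1/s` for
`s ≥ δ`, of the regularized logarithm, one has `s·(1 - G_δ'(s)) ≥ |s|/2 - 1` for every real `s`. -/
theorem mul_one_sub_Gderiv_ge (δ : ℝ) (hδ0 : 0 < δ) (hδ1 : δ ≤ 1 / 2) (s : ℝ) :
    |s| / 2 - 1 ≤ s * (1 - (if s < δ then 1 / δ else 1 / s)) := by
  split_ifs with h
  · have ht : (1 / δ) * δ = 1 := one_div_mul_cancel hδ0.ne'
    have ht2 : 2 ≤ 1 / δ := by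
      rw [le_div_iff₀ hδ0]; linarith
    rcases abs_cases s with ⟨ha, hs⟩ | ⟨ha, hs⟩ <;> rw [ha]
    · nlinarith [mul_le_mul_of_nonneg_left h.le (by positivity : (0:ℝ) ≤ 1/δ)]
    · nlinarith [mul_le_mul_of_nonpos_left ht2 hs.le]
  · push_neg at h
    have hs : 0 < s := lt_of_lt_of_le hδ0 h
    rw [abs_of_pos hs, mul_sub, mul_one_div, div_self hs.ne']
    linarith
end
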